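/- For N = 2 and M > 0, the structure function Y_{2,p,q,M}(x) satisfies the unitarity-type relation Y_{2,p,q,M}(x) · Y_{2,p,q,M}(q x) = 1. -/

import Mathlib

open Complex

noncomputable def pochInf (x a : ℂ) : ℂ := ∏' n : ℕ, (1 - x * a ^ n)

noncomputable def ThetaFn (a x : ℂ) : ℂ :=
  pochInf x a * pochInf (a * x⁻¹) a * pochInf a a

noncomputable def Ystruct (p q x : ℂ) (M : ℕ) : ℂ :=
  ∏ k ∈ Finset.Icc 1 (2 * M),
    (ThetaFn (q ^ 4) (x ^ 2 * p ^ (-(k : ℤ))) ^ 2 *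
      ThetaFn (q ^ 4) (x ^ 2 * q ^ 2 * p ^ (k : ℤ)) *
      ThetaFn (q ^ 4) (x ^ 2 * q ^ (-2 : ℤ) * p ^ (k : ℤ))) /
    (ThetaFn (q ^ 4) (x ^ 2 * p ^ (k : ℤ)) ^ 2 *
      ThetaFn (q ^ 4) (x ^ 2 * q ^ 2 * p ^ (-(k : ℤ))) *
      ThetaFn (q ^ 4) (x ^ 2 * q ^ (-2 : ℤ) * p ^ (-(k : ℤ))))

set_option maxHeartbeats 1000000 in
lemma multipliable_poch {a : ℂ} (ha : ‖a‖ < 1) (x : ℂ) :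
    Multipliable (fun n : ℕ => 1 - x * a ^ n) := by
  have h0 : Filter.Tendsto (fun n : ℕ => ‖x * a ^ n‖) Filter.atTop (nhds 0) := by
    have h1 := (tendsto_pow_atTop_nhds_zero_of_norm_lt_one ha).const_mul x
    rw [mul_zero] at h1
    simpa using h1.norm
  obtain ⟨N, hN⟩ := Filter.eventually_atTop.1
    (h0.eventually_lt_const (by norm_num : (0:ℝ) < 1/2))
  have hfn : ∀ (_ : Unit) (n : ℕ), (1 - x * a ^ (n + N) : ℂ) ≠ 0 := by
    intro _ n
    have h2 := hN (n + N) (Nat.le_add_left _ _)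
    intro h
    have h3 : (1 : ℂ) = x * a ^ (n + N) := by linear_combination h
    rw [← h3] at h2
    simp at h2
    linarith
  have htail : Multipliable (fun n : ℕ => 1 - x * a ^ (n + N)) := by
    exact (fun (_ : ∀ (_ : Unit) (n : ℕ), (1 - x * a ^ (n + N) : ℂ) ≠ 0)
        (h : Unit → Summable fun n : ℕ => Complex.log (1 - x * a ^ (n + N))) (u : Unit) =>
        Complex.multipliable_of_summable_log (h u)) hfn
      (fun _ => by
        apply Summable.of_norm
        have hb : Summable (fun n : ℕ => (3/2 : ℝ) * ‖x * a ^ (n + N)‖) := by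
          apply Summable.mul_left
          have hg : Summable (fun n : ℕ => ‖x‖ * ‖a‖ ^ N * ‖a‖ ^ n) :=
            (summable_geometric_of_lt_one (norm_nonneg a) ha).mul_left _
          apply hg.congr
          intro n
          rw [norm_mul, norm_pow, pow_add]
          ring
        apply hb.of_nonneg_of_le (fun n => norm_nonneg _)
        intro n
        have h2 : ‖-(x * a ^ (n + N))‖ ≤ 1/2 := by
          rw [norm_neg]; exact le_of_lt (hN (n + N) (Nat.le_add_left _ _))
        have h5 := Complex.norm_log_one_add_half_le_self h2
        rw [norm_neg] at h5
        have h6 : (1 : ℂ) - x * a ^ (n + N) = 1 + -(x * a ^ (n + N)) := by ring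
        show ‖Complex.log (1 - x * a ^ (n + N))‖ ≤ 3 / 2 * ‖x * a ^ (n + N)‖
        rw [h6]
        exact h5) ()
  exact htail.hasProd.prod_range_mul.multipliable

set_option maxHeartbeats 1000000 in
lemma pochInf_rec {a : ℂ} (ha : ‖a‖ < 1) (x : ℂ) :
    pochInf x a = (1 - x) * pochInf (a * x) a := by
  have hm : Multipliable (fun n : ℕ => 1 - x * a ^ (n + 1)) :=
    (multipliable_poch ha (x * a)).congr (fun n => by ring)
  rw [pochInf, tprod_eq_zero_mul' hm]
  congr 1
  · simp
  · rw [pochInf]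
    apply tprod_congr
    intro n
    ring

lemma theta_shift {a y : ℂ} (ha : ‖a‖ < 1) (ha0 : a ≠ 0) (hy : y ≠ 0)
    (hTy : ThetaFn a y ≠ 0) : ThetaFn a (a * y) = -y⁻¹ * ThetaFn a y := by
  have h1 : (1 : ℂ) - y ≠ 0 := by
    intro h
    apply hTy
    have hy1 : y = 1 := by linear_combination -h
    rw [ThetaFn, hy1, pochInf_rec ha 1]
    simp
  have hrec1 : pochInf y a = (1 - y) * pochInf (a * y) a := pochInf_rec ha y
  have hrec2 : pochInf y⁻¹ a = (1 - y⁻¹) * pochInf (a * y⁻¹) a := pochInf_rec ha y⁻¹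
  have harg : a * (a * y)⁻¹ = y⁻¹ := by field_simp
  have hinv : (1 : ℂ) - y⁻¹ = -y⁻¹ * (1 - y) := by field_simp; ring
  rw [ThetaFn, ThetaFn, harg, hrec2, hrec1, hinv]
  ring

lemma theta_step (q p x : ℂ) (hq : q ≠ 0) (hq1 : ‖q‖ < 1) (hp : p ≠ 0) (hx : x ≠ 0)
    (y : ℂ) (hy : y ≠ 0) (hT : ThetaFn (q ^ 4) y ≠ 0) :
    ThetaFn (q ^ 4) (q ^ 4 * y) = -y⁻¹ * ThetaFn (q ^ 4) y := by
  have ha : ‖(q : ℂ) ^ 4‖ < 1 := by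
    rw [norm_pow]
    exact pow_lt_one₀ (norm_nonneg q) hq1 (by norm_num)
  exact theta_shift ha (pow_ne_zero 4 hq) hy hT

/-- Unitarity-type relation: Y_{2,p,q,M}(x) · Y_{2,p,q,M}(qx) = 1. -/
theorem Ystruct_unitarity (p q x : ℂ) (M : ℕ) (hM : 0 < M)
    (hq0 : 0 < ‖q‖) (hq1 : ‖q‖ < 1) (hp : p ≠ 0) (hx : x ≠ 0)
    (hnz : ∀ j k : ℤ, ThetaFn (q ^ 4) (x ^ 2 * q ^ j * p ^ k) ≠ 0) :
    Ystruct p q x M * Ystruct p q (q * x) M = 1 := by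
  have hq : q ≠ 0 := by
    intro h; rw [h] at hq0; simp at hq0
  have hqn : ‖q‖ < 1 := hq1
  rw [Ystruct, Ystruct, ← Finset.prod_mul_distrib]
  apply Finset.prod_eq_one
  intro k _
  -- notation
  set a : ℂ := q ^ 4 with ha_def
  -- nonzero arguments
  have hxk : ∀ m : ℤ, x ^ 2 * p ^ m ≠ 0 := fun m =>
    mul_ne_zero (pow_ne_zero 2 hx) (zpow_ne_zero m hp)
  have hxqk : ∀ m : ℤ, x ^ 2 * q ^ (-2 : ℤ) * p ^ m ≠ 0 := fun m =>
    mul_ne_zero (mul_ne_zero (pow_ne_zero 2 hx) (zpow_ne_zero _ hq)) (zpow_ne_zero m hp)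
  -- hnz specialized
  have hnz0 : ∀ m : ℤ, ThetaFn a (x ^ 2 * p ^ m) ≠ 0 := by
    intro m
    have := hnz 0 m
    simpa using this
  have hnzm2 : ∀ m : ℤ, ThetaFn a (x ^ 2 * q ^ (-2 : ℤ) * p ^ m) ≠ 0 := fun m => hnz (-2) m
  have hnz2 : ∀ m : ℤ, ThetaFn a (x ^ 2 * q ^ 2 * p ^ m) ≠ 0 := by
    intro m
    have h := hnz 2 m
    have e : (q : ℂ) ^ (2 : ℤ) = q ^ (2 : ℕ) := by
      norm_cast
    rwa [e] at h
  -- key identities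
  have hq2 : (q : ℂ) ^ (-2 : ℤ) = (q ^ 2)⁻¹ := by
    rw [zpow_neg]; norm_cast
  have h4 : ∀ m : ℤ, ThetaFn a ((q * x) ^ 2 * q ^ 2 * p ^ m)
      = -(x ^ 2 * p ^ m)⁻¹ * ThetaFn a (x ^ 2 * p ^ m) := by
    intro m
    have e : (q * x) ^ 2 * q ^ 2 * p ^ m = q ^ 4 * (x ^ 2 * p ^ m) := by ring
    rw [e]
    exact theta_step q p x hq hqn hp hx _ (hxk m) (hnz0 m)
  have h2 : ∀ m : ℤ, ThetaFn a (x ^ 2 * q ^ 2 * p ^ m)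
      = -(x ^ 2 * q ^ (-2 : ℤ) * p ^ m)⁻¹ * ThetaFn a (x ^ 2 * q ^ (-2 : ℤ) * p ^ m) := by
    intro m
    have e : x ^ 2 * q ^ 2 * p ^ m = q ^ 4 * (x ^ 2 * q ^ (-2 : ℤ) * p ^ m) := by
      rw [hq2]; field_simp
    rw [e]
    exact theta_step q p x hq hqn hp hx _ (hxqk m) (hnzm2 m)
  -- rewrite (q*x)-arguments
  have e1 : ∀ m : ℤ, (q * x) ^ 2 * p ^ m = x ^ 2 * q ^ 2 * p ^ m := by intro m; ring
  have e2 : ∀ m : ℤ, (q * x) ^ 2 * q ^ (-2 : ℤ) * p ^ m = x ^ 2 * p ^ m := by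
    intro m; rw [hq2]; field_simp
  rw [e1, e1, e2, e2, h4, h4, h2, h2]
  -- abbreviate
  have hst : p ^ (k : ℤ) * p ^ (-(k : ℤ)) = 1 := by
    rw [← zpow_add₀ hp]; simp
  set s := p ^ (k : ℤ) with hs_def
  set t := p ^ (-(k : ℤ)) with ht_def
  set r := (q : ℂ) ^ (-2 : ℤ) with hr_def
  have hs : s ≠ 0 := zpow_ne_zero _ hp
  have ht : t ≠ 0 := zpow_ne_zero _ hp
  have hr : r ≠ 0 := zpow_ne_zero _ hq
  have htinv : t = s⁻¹ := eq_inv_of_mul_eq_one_right (by linear_combination hst)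
  set A := ThetaFn a (x ^ 2 * s) with hA_def
  set A' := ThetaFn a (x ^ 2 * t) with hA'_def
  set B := ThetaFn a (x ^ 2 * r * s) with hB_def
  set B' := ThetaFn a (x ^ 2 * r * t) with hB'_def
  have hA : A ≠ 0 := hnz0 _
  have hA' : A' ≠ 0 := hnz0 _
  have hB : B ≠ 0 := hnzm2 _
  have hB' : B' ≠ 0 := hnzm2 _
  rw [htinv]
  have hx2 : x ^ 2 ≠ 0 := pow_ne_zero 2 hx
  field_simp
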